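/- Let p_1,...,p_n be a basis of a lattice N ≅ ℤ^n and let p'_{r+1},...,p'_n and p''_1,...,p''_k be lattice vectors such that: (a) each p'_j (j > r) is a non-positive integer combination of p_1,...,p_n, (b) each p_j (j > r) is a non-positive integer combination of p_1,...,p_r, p'_{r+1},...,p'_n, and (c) p_1,...,p_r, p'_{r+1},...,p'_n is also a basis of N. Then, up to renumbering, for each j > r the vector p'_j has coordinate -1 at p_j and coordinate 0 at every p_s with s > r, s ≠ j, in the basis p_1,...,p_n. -/

import Mathlib

/-- Let `p_1, …, p_n` (the basis `b`) be a basis of `N ≅ ℤ^n`, and let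
`p'_j` (for `r ≤ j`) and `p''_1, …, p''_k` be lattice vectors such that (a) each `p'_j`
is a non-positive integer combination of `p_1, …, p_n`, (b) each `p_j` with `r ≤ j` is a
non-positive integer combination of `p_1, …, p_r, p'_{r+1}, …, p'_n`, and (c)
`p_1, …, p_r, p'_{r+1}, …, p'_n` is also a basis of `N`.  Then, up to renumbering, for
each `j ≥ r` the vector `p'_j` has coordinate `-1` at `p_j` and coordinate `0` at every
`p_s` with `s ≥ r`, `s ≠ j`. -/
theorem stmt_8 (n r k : ℕ) (b : Module.Basis (Fin n) ℤ (Fin n → ℤ))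
    (p' : Fin n → Fin n → ℤ) (p'' : Fin k → Fin n → ℤ)
    (ha : ∀ j : Fin n, r ≤ (j : ℕ) → ∀ i, b.repr (p' j) i ≤ 0)
    (hb : ∀ j : Fin n, r ≤ (j : ℕ) → ∃ a : Fin n → ℤ, (∀ i, a i ≤ 0) ∧
      (b j : Fin n → ℤ) = ∑ i, a i • (if (i : ℕ) < r then b i else p' i))
    (hc : ∃ b' : Module.Basis (Fin n) ℤ (Fin n → ℤ),
      ∀ i : Fin n, b' i = if (i : ℕ) < r then b i else p' i) :
    ∃ π : Equiv.Perm (Fin n), (∀ i : Fin n, (i : ℕ) < r → π i = i) ∧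
      ∀ j : Fin n, r ≤ (j : ℕ) →
        b.repr (p' (π j)) j = -1 ∧
        ∀ s : Fin n, r ≤ (s : ℕ) → s ≠ j → b.repr (p' (π j)) s = 0 := by
  classical
  choose a haneg haeq using hb
  -- coefficient of q_i in basis b at position s
  set D : Fin n → Fin n → ℤ :=
    fun i s => b.repr (if (i : ℕ) < r then b i else p' i) s with hD
  have hDle : ∀ i s : Fin n, r ≤ (s : ℕ) → D i s ≤ 0 := by
    intro i s hs
    by_cases hi : (i : ℕ) < r
    · have hne : i ≠ s := by intro h; subst h; omega
      simp [hD, hi, Module.Basis.repr_self, Finsupp.single_apply, hne]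
    · simpa [hD, hi] using ha i (le_of_not_gt hi) s
  have hDzero : ∀ i s : Fin n, (i : ℕ) < r → r ≤ (s : ℕ) → D i s = 0 := by
    intro i s hi hs
    have : i ≠ s := by intro h; subst h; omega
    simp [hD, hi, Module.Basis.repr_self, Finsupp.single_apply, this]
  -- key equation
  have key : ∀ j : Fin n, ∀ hj : r ≤ (j : ℕ), ∀ s : Fin n,
      (if j = s then (1:ℤ) else 0) = ∑ i, a j hj i * D i s := by
    intro j hj s
    have h1 : (b.repr (b j)) s = ∑ i, a j hj i * D i s := by
      conv_lhs => rw [haeq j hj]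
      rw [map_sum, Finsupp.coe_finset_sum, Finset.sum_apply]
      refine Finset.sum_congr rfl fun i _ => ?_
      rw [map_smul, Finsupp.smul_apply, smul_eq_mul, hD]
    rw [← h1]
    simp [Module.Basis.repr_self, Finsupp.single_apply]
  have hterm : ∀ j : Fin n, ∀ hj : r ≤ (j : ℕ), ∀ i s : Fin n, r ≤ (s : ℕ) →
      0 ≤ a j hj i * D i s := by
    intro j hj i s hs
    have := mul_nonneg (neg_nonneg.mpr (haneg j hj i)) (neg_nonneg.mpr (hDle i s hs))
    rwa [neg_mul_neg] at this
  -- existence of the distinguished index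
  have main : ∀ j : Fin n, r ≤ (j : ℕ) → ∃ i : Fin n, r ≤ (i : ℕ) ∧
      b.repr (p' i) j = -1 ∧
      ∀ s : Fin n, r ≤ (s : ℕ) → s ≠ j → b.repr (p' i) s = 0 := by
    intro j hj
    have hdiag : (1:ℤ) = ∑ i, a j hj i * D i j := by simpa using key j hj j
    obtain ⟨i, _, hine⟩ : ∃ i ∈ Finset.univ, a j hj i * D i j ≠ 0 :=
      Finset.exists_ne_zero_of_sum_ne_zero (by rw [← hdiag]; norm_num)
    have hpos : 0 < a j hj i * D i j :=
      lt_of_le_of_ne (hterm j hj i j hj) (Ne.symm hine)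
    have hle1 : a j hj i * D i j ≤ 1 := by
      rw [hdiag]
      exact Finset.single_le_sum (fun i _ => hterm j hj i j hj) (Finset.mem_univ i)
    have heq1 : a j hj i * D i j = 1 := le_antisymm hle1 hpos
    -- both factors are -1 / each nonpos with product 1
    have hmul : (-(a j hj i)) * (-(D i j)) = 1 := by ring_nf; linarith [heq1]
    have ha1 : -(a j hj i) = 1 :=
      Int.eq_one_of_mul_eq_one_right (by linarith [haneg j hj i]) hmul
    have hd1 : -(D i j) = 1 :=
      Int.eq_one_of_mul_eq_one_left (by linarith [hDle i j hj]) hmul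
    have hDij : D i j = -1 := by linarith
    have hir : r ≤ (i : ℕ) := by
      by_contra hlt
      have := hDzero i j (lt_of_not_ge hlt) hj
      omega
    have hnotlt : ¬ (i : ℕ) < r := not_lt.mpr hir
    refine ⟨i, hir, by simpa [hD, hnotlt] using hDij, ?_⟩
    intro s hs hsj
    have hoff : (0:ℤ) = ∑ i', a j hj i' * D i' s := by
      simpa [Ne.symm hsj] using key j hj s
    have hzero : a j hj i * D i s = 0 := by
      have := (Finset.sum_eq_zero_iff_of_nonneg
        (fun i' _ => hterm j hj i' s hs)).mp hoff.symm i (Finset.mem_univ i)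
      exact this
    have : D i s = 0 := by
      have hai : a j hj i = -1 := by linarith
      rw [hai] at hzero; linarith
    simpa [hD, hnotlt] using this
  choose σ hσr hσ1 hσ2 using main
  set g : Fin n → Fin n := fun j => if h : r ≤ (j : ℕ) then σ j h else j with hg
  have hginj : Function.Injective g := by
    intro x y hxy
    by_cases hx : r ≤ (x : ℕ) <;> by_cases hy : r ≤ (y : ℕ)
    · simp only [hg, dif_pos hx, dif_pos hy] at hxy
      by_contra hne
      have h1 : b.repr (p' (σ x hx)) x = -1 := hσ1 x hx
      have h2 : b.repr (p' (σ y hy)) x = 0 := hσ2 y hy x hx hne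
      rw [hxy, h2] at h1
      exact absurd h1 (by norm_num)
    · exfalso
      simp only [hg, dif_pos hx, dif_neg hy] at hxy
      have := hσr x hx
      rw [hxy] at this
      omega
    · exfalso
      simp only [hg, dif_neg hx, dif_pos hy] at hxy
      have := hσr y hy
      rw [← hxy] at this
      omega
    · simpa [hg, dif_neg hx, dif_neg hy] using hxy
  refine ⟨Equiv.ofBijective g (Finite.injective_iff_bijective.mp hginj), ?_, ?_⟩
  · intro i hi
    simp [Equiv.ofBijective, hg, not_le.mpr hi]
  · intro j hj
    have hπ : (Equiv.ofBijective g (Finite.injective_iff_bijective.mp hginj)) j = σ j hj := by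
      simp [Equiv.ofBijective, hg, hj]
    rw [hπ]
    exact ⟨hσ1 j hj, fun s hs hsj => hσ2 j hj s hs hsj⟩
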